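/- For all μ, λ ∈ ℝ, as z → 2 from the right one has Δ(μ,λ;z) = B₂ (μλ − μ − λ)(z−2)^{−1/2} + (1 + λ − μλ) + O((z−2)^{1/2}) with the constant B₂ = 1/√2 > 0; i.e. the function z ↦ Δ(μ,λ;z) − B₂(μλ−μ−λ)(z−2)^{−1/2} − (1+λ−μλ) is O((z−2)^{1/2}) along right neighborhoods of 2. -/

import Mathlib

open MeasureTheory Real Filter Topology Asymptotics intervalIntegral

/-- `a(z) = (1/2π)∫_{−π}^{π} dq/(z − 1 + cos q)`. -/
noncomputable def aF (z : ℝ) : ℝ :=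
  (2 * Real.pi)⁻¹ * ∫ q in (-Real.pi)..Real.pi, (z - 1 + Real.cos q)⁻¹

/-- `b(z) = −(1/2π)∫_{−π}^{π} cos q dq/(z − 1 + cos q)`. -/
noncomputable def bF (z : ℝ) : ℝ :=
  -((2 * Real.pi)⁻¹ * ∫ q in (-Real.pi)..Real.pi, Real.cos q / (z - 1 + Real.cos q))

/-- `c(z) = (1/2π)∫_{−π}^{π} cos² q dq/(z − 1 + cos q)`. -/
noncomputable def cF (z : ℝ) : ℝ :=
  (2 * Real.pi)⁻¹ * ∫ q in (-Real.pi)..Real.pi, (Real.cos q) ^ 2 / (z - 1 + Real.cos q)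

/-- The Fredholm determinant `Δ(μ,λ;z) = (1 − μ a(z))(1 − λ c(z)) − μλ b(z)²`. -/
noncomputable def Δdet (μ lam z : ℝ) : ℝ :=
  (1 - μ * aF z) * (1 - lam * cF z) - μ * lam * (bF z) ^ 2

lemma hasDerivAt_F {A : ℝ} (hA : 1 < A) {q : ℝ} (hq : q ∈ Set.Ioo (-Real.pi) Real.pi) :
    HasDerivAt (fun q => (2 / Real.sqrt (A^2-1)) *
        Real.arctan (Real.sqrt ((A-1)/(A+1)) * Real.tan (q/2)))
      ((A + Real.cos q)⁻¹) q := by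
  set r := Real.sqrt (A^2-1) with hr
  set k := Real.sqrt ((A-1)/(A+1)) with hk
  have hA1 : (0:ℝ) < A - 1 := by linarith
  have hA2 : (0:ℝ) < A + 1 := by linarith
  have hr2 : r^2 = A^2 - 1 := Real.sq_sqrt (by nlinarith)
  have hrpos : 0 < r := Real.sqrt_pos.2 (by nlinarith)
  have hk2 : k^2 = (A-1)/(A+1) := Real.sq_sqrt (by positivity)
  have hkA : k * (A+1) = r := by
    rw [hk, hr]
    rw [show A^2 - 1 = ((A-1)/(A+1)) * (A+1)^2 by field_simp; ring]
    rw [Real.sqrt_mul (by positivity), Real.sqrt_sq hA2.le]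
  have hcospos : 0 < Real.cos (q/2) := by
    apply Real.cos_pos_of_mem_Ioo
    constructor <;> [linarith [hq.1]; linarith [hq.2]]
  have hcos : Real.cos (q/2) ≠ 0 := ne_of_gt hcospos
  have hhalf : HasDerivAt (fun q : ℝ => q/2) (1/2) q := (hasDerivAt_id q).div_const 2
  have htan : HasDerivAt (fun q : ℝ => Real.tan (q/2)) (1 / Real.cos (q/2)^2 * (1/2)) q :=
    by have h := Real.hasDerivAt_tan hcos; exact h.comp q hhalf
  have harctan : HasDerivAt (fun q : ℝ => Real.arctan (k * Real.tan (q/2)))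
      ((1 + (k * Real.tan (q/2))^2)⁻¹ * (k * (1 / Real.cos (q/2)^2 * (1/2)))) q := by
    have := (Real.hasDerivAt_arctan (k * Real.tan (q/2))).comp q (htan.const_mul k)
    exact this.congr_deriv (by ring)
  have key := harctan.const_mul (2 / r)
  refine key.congr_deriv (Eq.symm ?_)
  have ht : Real.tan (q/2) = Real.sin (q/2) / Real.cos (q/2) := Real.tan_eq_sin_div_cos _
  have hsc : Real.sin (q/2)^2 = 1 - Real.cos (q/2)^2 := by
    have := Real.sin_sq_add_cos_sq (q/2); nlinarith
  have hcq : Real.cos q = 2 * Real.cos (q/2)^2 - 1 := by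
    have := Real.cos_sq (q/2)
    rw [show 2*(q/2) = q by ring] at this
    linarith
  have hApos : A + Real.cos q > 0 := by nlinarith [Real.neg_one_le_cos q]
  have hkpos : 0 < k := Real.sqrt_pos.2 (by positivity)
  rw [ht]
  have hc2 : Real.cos (q/2)^2 > 0 := by positivity
  have hk2' : k^2 * (A+1) = A - 1 := by
    rw [hk2]; field_simp
  field_simp
  rw [hcq, ← hkA]
  linear_combination (2*Real.cos (q/2)^2*k^3*(A+1)) * hsc
    + (2*Real.cos (q/2)^2*k*(1-Real.cos (q/2)^2)) * hk2'
    + (k*(A-1)*(1-2*Real.cos (q/2)^2)) * hsc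
    + (k*Real.sin (q/2)^2*(1-2*Real.cos (q/2)^2)) * hk2'

lemma cont_inv_A_add_cos {A : ℝ} (hA : 1 < A) :
    Continuous (fun q : ℝ => (A + Real.cos q)⁻¹) := by
  apply Continuous.inv₀ (by continuity)
  intro q
  nlinarith [Real.neg_one_le_cos q]

lemma integral_inv_A_add_cos {A : ℝ} (hA : 1 < A) :
    ∫ q in (-Real.pi)..Real.pi, (A + Real.cos q)⁻¹ = 2 * Real.pi / Real.sqrt (A^2-1) := by
  set r := Real.sqrt (A^2-1) with hr
  set k := Real.sqrt ((A-1)/(A+1)) with hk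
  have hrpos : 0 < r := Real.sqrt_pos.2 (by nlinarith)
  have hkpos : 0 < k := Real.sqrt_pos.2 (by apply div_pos <;> linarith)
  have hcont := cont_inv_A_add_cos hA
  have hint : ∀ a b : ℝ, IntervalIntegrable (fun q : ℝ => (A + Real.cos q)⁻¹)
      MeasureTheory.volume a b := fun a b => hcont.intervalIntegrable a b
  have hpi := Real.pi_pos
  -- the primitive is continuous
  have hprim : Continuous (fun u : ℝ => ∫ q in (-u)..u, (A + Real.cos q)⁻¹) := by
    have h1 := intervalIntegral.continuous_primitive hint 0
    have heq : (fun u : ℝ => ∫ q in (-u)..u, (A + Real.cos q)⁻¹)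
        = fun u : ℝ => (∫ q in (0:ℝ)..u, (A + Real.cos q)⁻¹)
          - ∫ q in (0:ℝ)..(-u), (A + Real.cos q)⁻¹ := by
      funext u
      rw [← intervalIntegral.integral_add_adjacent_intervals (hint (-u) 0) (hint 0 u),
        intervalIntegral.integral_symm]
      ring
    rw [heq]
    exact h1.sub (h1.comp continuous_neg)
  -- FTC on subintervals
  have hFTC : ∀ b ∈ Set.Ioo (0:ℝ) Real.pi,
      (∫ q in (-b)..b, (A + Real.cos q)⁻¹)
        = (4 / r) * Real.arctan (k * Real.tan (b/2)) := by
    intro b hb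
    have hsub : ∀ x ∈ Set.uIcc (-b) b, HasDerivAt (fun q => (2 / r) *
        Real.arctan (k * Real.tan (q/2))) ((A + Real.cos x)⁻¹) x := by
      intro x hx
      rw [Set.uIcc_of_le (by linarith [hb.1] : -b ≤ b)] at hx
      exact hasDerivAt_F hA ⟨by linarith [hx.1, hb.2], by linarith [hx.2, hb.2]⟩
    rw [intervalIntegral.integral_eq_sub_of_hasDerivAt hsub (hint (-b) b)]
    rw [show (-b)/2 = -(b/2) by ring, Real.tan_neg, mul_neg, Real.arctan_neg]
    ring
  -- limit of the FTC expression
  have hlim1 : Tendsto (fun b : ℝ => (4 / r) * Real.arctan (k * Real.tan (b/2)))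
      (𝓝[<] Real.pi) (𝓝 ((4 / r) * (Real.pi / 2))) := by
    have h2 : Tendsto (fun b : ℝ => b / 2) (𝓝[<] Real.pi) (𝓝[<] (Real.pi / 2)) := by
      apply tendsto_nhdsWithin_of_tendsto_nhds_of_eventually_within
      · exact (tendsto_id.div_const 2).mono_left nhdsWithin_le_nhds
      · filter_upwards [self_mem_nhdsWithin] with b hb
        simp only [Set.mem_Iio] at hb ⊢; linarith
    have h3 : Tendsto (fun b : ℝ => k * Real.tan (b/2)) (𝓝[<] Real.pi) atTop :=
      (Real.tendsto_tan_pi_div_two.comp h2).const_mul_atTop hkpos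
    have h4 : Tendsto (fun b : ℝ => Real.arctan (k * Real.tan (b/2)))
        (𝓝[<] Real.pi) (𝓝 (Real.pi / 2)) :=
      (tendsto_nhds_of_tendsto_nhdsWithin Real.tendsto_arctan_atTop).comp h3
    exact h4.const_mul _
  -- limit of the primitive
  have hlim2 : Tendsto (fun b : ℝ => ∫ q in (-b)..b, (A + Real.cos q)⁻¹)
      (𝓝[<] Real.pi) (𝓝 (∫ q in (-Real.pi)..Real.pi, (A + Real.cos q)⁻¹)) :=
    (hprim.tendsto Real.pi).mono_left nhdsWithin_le_nhds
  have heq : Tendsto (fun b : ℝ => ∫ q in (-b)..b, (A + Real.cos q)⁻¹)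
      (𝓝[<] Real.pi) (𝓝 ((4 / r) * (Real.pi / 2))) := by
    refine hlim1.congr' ?_
    filter_upwards [Ioo_mem_nhdsLT_of_mem (Set.right_mem_Ioc.2 hpi)] with b hb
    exact (hFTC b hb).symm
  have := tendsto_nhds_unique hlim2 heq
  rw [this]; ring

lemma aF_eq {z : ℝ} (hz : 2 < z) : aF z = (Real.sqrt ((z-1)^2 - 1))⁻¹ := by
  have hA : 1 < z - 1 := by linarith
  have hpi := Real.pi_pos
  unfold aF
  have : (fun q : ℝ => (z - 1 + Real.cos q)⁻¹) = fun q : ℝ => ((z-1) + Real.cos q)⁻¹ := rfl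
  rw [this, integral_inv_A_add_cos hA]
  field_simp

lemma bF_eq {z : ℝ} (hz : 2 < z) :
    bF z = (z - 1) * (Real.sqrt ((z-1)^2 - 1))⁻¹ - 1 := by
  have hA : 1 < z - 1 := by linarith
  have hpi := Real.pi_pos
  have hrpos : 0 < Real.sqrt ((z-1)^2-1) := Real.sqrt_pos.2 (by nlinarith)
  have hcont := cont_inv_A_add_cos hA
  have hint : IntervalIntegrable (fun q : ℝ => ((z-1) + Real.cos q)⁻¹)
      MeasureTheory.volume (-Real.pi) Real.pi := hcont.intervalIntegrable _ _
  unfold bF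
  have hcongr : (∫ q in (-Real.pi)..Real.pi, Real.cos q / (z - 1 + Real.cos q))
      = ∫ q in (-Real.pi)..Real.pi, (1 - (z-1) * ((z-1) + Real.cos q)⁻¹) := by
    apply intervalIntegral.integral_congr
    intro q _
    have hne : (z-1) + Real.cos q ≠ 0 := by nlinarith [Real.neg_one_le_cos q]
    field_simp
    ring
  have hc1 : IntervalIntegrable (fun _ : ℝ => (1:ℝ)) MeasureTheory.volume
      (-Real.pi) Real.pi := continuous_const.intervalIntegrable _ _
  rw [hcongr, intervalIntegral.integral_sub hc1 (hint.const_mul _),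
    intervalIntegral.integral_const_mul, integral_inv_A_add_cos hA,
    intervalIntegral.integral_const]
  field_simp
  ring

lemma cF_eq {z : ℝ} (hz : 2 < z) :
    cF z = (z - 1)^2 * (Real.sqrt ((z-1)^2 - 1))⁻¹ - (z - 1) := by
  have hA : 1 < z - 1 := by linarith
  have hpi := Real.pi_pos
  have hrpos : 0 < Real.sqrt ((z-1)^2-1) := Real.sqrt_pos.2 (by nlinarith)
  have hcont := cont_inv_A_add_cos hA
  have hint : IntervalIntegrable (fun q : ℝ => ((z-1) + Real.cos q)⁻¹)
      MeasureTheory.volume (-Real.pi) Real.pi := hcont.intervalIntegrable _ _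
  unfold cF
  have hcongr : (∫ q in (-Real.pi)..Real.pi, (Real.cos q)^2 / (z - 1 + Real.cos q))
      = ∫ q in (-Real.pi)..Real.pi,
        ((Real.cos q - (z-1)) + (z-1)^2 * ((z-1) + Real.cos q)⁻¹) := by
    apply intervalIntegral.integral_congr
    intro q _
    have hne : (z-1) + Real.cos q ≠ 0 := by nlinarith [Real.neg_one_le_cos q]
    field_simp
    ring
  have hc1 : IntervalIntegrable (fun _ : ℝ => (z-1:ℝ)) MeasureTheory.volume
      (-Real.pi) Real.pi := continuous_const.intervalIntegrable _ _
  have hint2 : IntervalIntegrable (fun q : ℝ => Real.cos q - (z-1))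
      MeasureTheory.volume (-Real.pi) Real.pi :=
    (Real.continuous_cos.sub continuous_const).intervalIntegrable _ _
  rw [hcongr, intervalIntegral.integral_add hint2 (hint.const_mul _),
    intervalIntegral.integral_sub (Real.continuous_cos.intervalIntegrable _ _)
      hc1,
    intervalIntegral.integral_const_mul, integral_inv_A_add_cos hA,
    integral_cos, intervalIntegral.integral_const]
  simp only [Real.sin_pi, Real.sin_neg, neg_neg, smul_eq_mul]
  field_simp
  ring

lemma Δdet_eq {μ lam z : ℝ} (hz : 2 < z) :
    Δdet μ lam z = 1 + lam * (z-1) - μ * lam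
      + (μ * lam * (z-1) - lam * (z-1)^2 - μ) * (Real.sqrt ((z-1)^2 - 1))⁻¹ := by
  have hrpos : 0 < Real.sqrt ((z-1)^2-1) := Real.sqrt_pos.2 (by nlinarith)
  unfold Δdet
  rw [aF_eq hz, bF_eq hz, cF_eq hz]
  field_simp
  ring

set_option maxHeartbeats 1000000 in
/-- For all `μ, λ ∈ ℝ`, as `z → 2⁺`:
`Δ(μ,λ;z) = B₂ (μλ − μ − λ)(z−2)^{−1/2} + (1 + λ − μλ) + O((z−2)^{1/2})`,
with `B₂ = 1/√2 > 0`. -/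
theorem det_asymptotics_right_of_two (μ lam : ℝ) :
    (0 : ℝ) < (Real.sqrt 2)⁻¹ ∧
    (fun z : ℝ => Δdet μ lam z
        - (Real.sqrt 2)⁻¹ * (μ * lam - μ - lam) * (z - 2) ^ (-(1/2) : ℝ)
        - (1 + lam - μ * lam))
      =O[𝓝[>] (2:ℝ)] (fun z : ℝ => (z - 2) ^ ((1/2) : ℝ)) := by
  have hs2 : (0:ℝ) < Real.sqrt 2 := Real.sqrt_pos.2 two_pos
  refine ⟨by positivity, ?_⟩
  rw [isBigO_iff]
  refine ⟨|lam| + (|μ*lam| + 3*|lam|) + |μ*lam - μ - lam|, ?_⟩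
  filter_upwards [Ioo_mem_nhdsGT_of_mem (Set.left_mem_Ico.2 (by norm_num) :
      (2:ℝ) ∈ Set.Ico 2 3)] with z hz
  obtain ⟨hz2, hz3⟩ := hz
  set w : ℝ := z - 2 with hwdef
  have hw0 : 0 < w := by simp [hwdef]; linarith
  have hw1 : w < 1 := by simp [hwdef]; linarith
  set sw : ℝ := Real.sqrt w with hswdef
  have hsw0 : 0 < sw := Real.sqrt_pos.2 hw0
  have hsw2 : sw^2 = w := Real.sq_sqrt hw0.le
  have hsw1 : sw ≤ 1 := by nlinarith
  set s2 : ℝ := Real.sqrt 2 with hs2def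
  have hs22 : s2^2 = 2 := Real.sq_sqrt two_pos.le
  have hs21 : 1 ≤ s2 := by nlinarith
  set r : ℝ := Real.sqrt ((z-1)^2 - 1) with hrdef
  have hr2 : r^2 = w^2 + 2*w := by
    rw [hrdef, Real.sq_sqrt (by nlinarith)]; simp [hwdef]; ring
  have hr0 : 0 < r := Real.sqrt_pos.2 (by nlinarith)
  set t : ℝ := s2 * sw with htdef
  have ht0 : 0 < t := by positivity
  have ht2 : t^2 = 2*w := by rw [htdef]; nlinarith
  have hrt : t ≤ r := by nlinarith [sq_nonneg (r - t)]
  have hswt : sw ≤ t := by nlinarith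
  have hswr : sw ≤ r := le_trans hswt hrt
  -- rpow rewriting
  have hp : (z - 2 : ℝ) ^ ((1/2) : ℝ) = sw := by
    rw [hswdef, hwdef, Real.sqrt_eq_rpow]
  have hm : (z - 2 : ℝ) ^ (-(1/2) : ℝ) = sw⁻¹ := by
    rw [Real.rpow_neg (by linarith : (0:ℝ) ≤ z - 2), hp]
  rw [Real.norm_eq_abs, Real.norm_eq_abs, hp, hm, Δdet_eq hz2, ← hrdef]
  -- abbreviations
  set N : ℝ := μ * lam * (z-1) - lam * (z-1)^2 - μ with hN
  set N₂ : ℝ := μ * lam - μ - lam with hN2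
  have hzw : z - 1 = w + 1 := by simp [hwdef]; ring
  have hE : 1 + lam * (z-1) - μ*lam + N * r⁻¹ - s2⁻¹ * N₂ * sw⁻¹ - (1 + lam - μ*lam)
      = lam * w + (μ*lam*w - lam*(w^2 + 2*w)) * r⁻¹ + N₂ * (r⁻¹ - t⁻¹) := by
    rw [hN, hzw, htdef, mul_inv]
    ring
  rw [hE]
  have habs : |lam * w + (μ*lam*w - lam*(w^2 + 2*w)) * r⁻¹ + N₂ * (r⁻¹ - t⁻¹)|
      ≤ |lam * w| + |(μ*lam*w - lam*(w^2 + 2*w)) * r⁻¹| + |N₂ * (r⁻¹ - t⁻¹)| :=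
    (abs_add_le _ _).trans (by gcongr; exact abs_add_le _ _)
  have hrinv : r⁻¹ ≤ sw⁻¹ := by
    apply inv_anti₀ hsw0 hswr
  have hwsw : w ≤ sw := by nlinarith
  have e1 : |lam * w| ≤ |lam| * sw := by
    rw [abs_mul, abs_of_pos hw0]
    exact mul_le_mul_of_nonneg_left hwsw (abs_nonneg lam)
  have e2 : |(μ*lam*w - lam*(w^2 + 2*w)) * r⁻¹| ≤ (|μ*lam| + 3*|lam|) * sw := by
    rw [abs_mul, abs_of_pos (inv_pos.2 hr0)]
    have h1 : |μ*lam*w - lam*(w^2 + 2*w)| ≤ (|μ*lam| + 3*|lam|) * w := by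
      refine (abs_sub _ _).trans ?_
      rw [abs_mul, abs_mul, abs_mul, abs_of_pos hw0,
        abs_of_pos (by nlinarith : (0:ℝ) < w^2+2*w)]
      nlinarith [mul_nonneg (abs_nonneg lam) hw0.le,
        mul_le_mul_of_nonneg_left (show w^2 ≤ w by nlinarith) (abs_nonneg lam)]
    have h2 : |μ*lam*w - lam*(w^2 + 2*w)| * r⁻¹ ≤ ((|μ*lam| + 3*|lam|) * w) * sw⁻¹ := by
      apply mul_le_mul h1 hrinv (by positivity) (by positivity)
    refine h2.trans (le_of_eq ?_)
    rw [mul_assoc]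
    congr 1
    rw [← hsw2]
    field_simp
  have e3 : |N₂ * (r⁻¹ - t⁻¹)| ≤ |N₂| * sw := by
    rw [abs_mul]
    apply mul_le_mul_of_nonneg_left ?_ (abs_nonneg _)
    have hd : t⁻¹ - r⁻¹ = w^2 / ((r + t) * (t * r)) := by
      rw [eq_div_iff (by positivity)]
      field_simp
      linear_combination hr2 - ht2
    have hb : w^2 / ((r + t) * (t * r)) ≤ sw := by
      rw [div_le_iff₀ (by positivity)]
      nlinarith [mul_pos hsw0 ht0, mul_pos ht0 hr0, mul_pos hw0 hsw0,
        mul_le_mul_of_nonneg_left hrt ht0.le, mul_le_mul_of_nonneg_left hswt hw0.le]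
    have : |r⁻¹ - t⁻¹| = t⁻¹ - r⁻¹ := by
      rw [abs_sub_comm, abs_of_nonneg]
      have := inv_anti₀ ht0 hrt
      linarith
    rw [this, hd]
    exact hb
  calc |lam * w + (μ*lam*w - lam*(w^2 + 2*w)) * r⁻¹ + N₂ * (r⁻¹ - t⁻¹)|
      ≤ |lam * w| + |(μ*lam*w - lam*(w^2 + 2*w)) * r⁻¹| + |N₂ * (r⁻¹ - t⁻¹)| := habs
    _ ≤ |lam| * sw + (|μ*lam| + 3*|lam|) * sw + |N₂| * sw := by gcongr
    _ = (|lam| + (|μ*lam| + 3*|lam|) + |N₂|) * |sw| := by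
        rw [abs_of_pos hsw0]; ring
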